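/- arXiv:2402.03975 — 2 statements merged into one kernel-verified Lean document; each statement's English description precedes it below -/
import Mathlib

section
/- Suppose the graph G is ergodic, r ∈ P^{σ,τ} for some (σ,τ) ∈ Ξ, and fix a discount factor γ with 1 > γ > 1 − 1/(6n²Δ(r)). Then (σ,τ) is the unique pair of optimal policies of the discounted game with discount factor γ; equivalently, for every vector λ^{(γ)} ∈ ℝ^n satisfying the Shapley equations λ^{(γ)}_i = max_{(i,j)∈E} {(1−γ)r_{ij} + γλ^{(γ)}_j} for i ∈ V_Max and λ^{(γ)}_i = min_{(i,j)∈E} {(1−γ)r_{ij} + γλ^{(γ)}_j} for i ∈ V_Min, the maximum at each i ∈ V_Max is achieved only by the edge (i,σ(i)) and the minimum at each i ∈ V_Min is achieved only by the edge (i,τ(i)). -/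
open MeasureTheory

/-- Weight of a pair of vertices: the weight of the corresponding edge if it exists, `0`
otherwise. -/
noncomputable def wt {n : ℕ} (E : Finset (Fin n × Fin n))
    (r : {e : Fin n × Fin n // e ∈ E} → ℝ) (p : Fin n × Fin n) : ℝ :=
  if h : p ∈ E then r ⟨p, h⟩ else 0

/-- The set of values `r_{ij} + u_j` over the edges `(i,j)` going out of `i`. -/
def outVals {n : ℕ} (E : Finset (Fin n × Fin n)) (r : {e : Fin n × Fin n // e ∈ E} → ℝ)
    (u : Fin n → ℝ) (i : Fin n) : Set ℝ :=
  {v | ∃ j : Fin n, (i, j) ∈ E ∧ v = wt E r (i, j) + u j}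

/-- `(λ, u)` solves the ergodic equation:
`λ + u i = max_{(i,j) ∈ E} (r_{ij} + u_j)` for `i ∈ VMax` and
`λ + u i = min_{(i,j) ∈ E} (r_{ij} + u_j)` for `i ∉ VMax` (i.e. `i ∈ VMin`). -/
def IsErgodicSol {n : ℕ} (E : Finset (Fin n × Fin n)) (VMax : Finset (Fin n))
    (r : {e : Fin n × Fin n // e ∈ E} → ℝ) (lam : ℝ) (u : Fin n → ℝ) : Prop :=
  ∀ i : Fin n,
    (i ∈ VMax → IsGreatest (outVals E r u i) (lam + u i)) ∧
    (i ∉ VMax → IsLeast (outVals E r u i) (lam + u i))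

/-- A policy of player Max. -/
def IsMaxPolicy {n : ℕ} (E : Finset (Fin n × Fin n)) (VMax : Finset (Fin n))
    (σ : {i : Fin n // i ∈ VMax} → Fin n) : Prop :=
  ∀ i, (i.1, σ i) ∈ E

/-- A policy of player Min. -/
def IsMinPolicy {n : ℕ} (E : Finset (Fin n × Fin n)) (VMax : Finset (Fin n))
    (τ : {i : Fin n // i ∉ VMax} → Fin n) : Prop :=
  ∀ i, (i.1, τ i) ∈ E

/-- The successor map of the subgraph `G^{σ,τ}` in which every vertex keeps only the edge
chosen by the corresponding policy. -/
def combine {n : ℕ} (VMax : Finset (Fin n)) (σ : {i : Fin n // i ∈ VMax} → Fin n)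
    (τ : {i : Fin n // i ∉ VMax} → Fin n) : Fin n → Fin n :=
  fun i => if h : i ∈ VMax then σ ⟨i, h⟩ else τ ⟨i, h⟩

/-- The bias `u` induces the pair of policies `(σ, τ)`: at every vertex, the edge chosen by
the policy achieves the maximum (for Max) or minimum (for Min) of `r_{ij} + u_j`. -/
def Induces {n : ℕ} (E : Finset (Fin n × Fin n)) (VMax : Finset (Fin n))
    (r : {e : Fin n × Fin n // e ∈ E} → ℝ) (u : Fin n → ℝ)
    (σ : {i : Fin n // i ∈ VMax} → Fin n) (τ : {i : Fin n // i ∉ VMax} → Fin n) : Prop :=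
  IsMaxPolicy E VMax σ ∧ IsMinPolicy E VMax τ ∧
  (∀ i : {i : Fin n // i ∈ VMax},
      IsGreatest (outVals E r u i.1) (wt E r (i.1, σ i) + u (σ i))) ∧
  (∀ i : {i : Fin n // i ∉ VMax},
      IsLeast (outVals E r u i.1) (wt E r (i.1, τ i) + u (τ i)))

/-- The mean payoff `g_i` of the play starting at `i` following the successor map `f`. -/
noncomputable def payoff {n : ℕ} (E : Finset (Fin n × Fin n))
    (r : {e : Fin n × Fin n // e ∈ E} → ℝ) (f : Fin n → Fin n) (i : Fin n) : ℝ :=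
  Filter.liminf
    (fun N : ℕ => (N : ℝ)⁻¹ * ∑ t ∈ Finset.range N, wt E r (f^[t] i, f^[t + 1] i))
    Filter.atTop

/-- `x` lies on a directed cycle of the functional graph of `f`. -/
def IsPeriodicVertex {n : ℕ} (f : Fin n → Fin n) (x : Fin n) : Prop :=
  ∃ k : ℕ, 0 < k ∧ f^[k] x = x

/-- The functional graph of `f` has exactly one directed cycle. -/
def HasUniqueCycle {n : ℕ} (f : Fin n → Fin n) : Prop :=
  ∀ x y : Fin n, IsPeriodicVertex f x → IsPeriodicVertex f y → ∃ k : ℕ, f^[k] x = y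

/-- `(σ, τ)` is a bias-induced pair of policies of the MPG with weights `r`. -/
def BiasInduced {n : ℕ} (E : Finset (Fin n × Fin n)) (VMax : Finset (Fin n))
    (r : {e : Fin n × Fin n // e ∈ E} → ℝ)
    (σ : {i : Fin n // i ∈ VMax} → Fin n) (τ : {i : Fin n // i ∉ VMax} → Fin n) : Prop :=
  ∃ lam u, IsErgodicSol E VMax r lam u ∧ Induces E VMax r u σ τ

/-- `(σ, τ) ∈ Ξ`: a pair of policies whose subgraph `G^{σ,τ}` has exactly one cycle. -/
def InXi {n : ℕ} (E : Finset (Fin n × Fin n)) (VMax : Finset (Fin n))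
    (σ : {i : Fin n // i ∈ VMax} → Fin n) (τ : {i : Fin n // i ∉ VMax} → Fin n) : Prop :=
  IsMaxPolicy E VMax σ ∧ IsMinPolicy E VMax τ ∧ HasUniqueCycle (combine VMax σ τ)

/-- `P^{σ,τ}`: the set of weight vectors for which `(σ, τ)` is the unique pair of
bias-induced policies. -/
def Pcell {n : ℕ} (E : Finset (Fin n × Fin n)) (VMax : Finset (Fin n))
    (σ : {i : Fin n // i ∈ VMax} → Fin n) (τ : {i : Fin n // i ∉ VMax} → Fin n) :
    Set ({e : Fin n × Fin n // e ∈ E} → ℝ) :=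
  {r | BiasInduced E VMax r σ τ ∧
    ∀ σ' τ', BiasInduced E VMax r σ' τ' → σ' = σ ∧ τ' = τ}

/-- `U := ∪_{(σ,τ) ∈ Ξ} P^{σ,τ}`. -/
def Ucell {n : ℕ} (E : Finset (Fin n × Fin n)) (VMax : Finset (Fin n)) :
    Set ({e : Fin n × Fin n // e ∈ E} → ℝ) :=
  ⋃ σ, ⋃ τ, ⋃ (_ : InXi E VMax σ τ), Pcell E VMax σ τ

/-- `(λ, u)` solves the zero-player (fixed policies) equation on the functional graph of
`f`. -/
def IsZeroPlayerSol {n : ℕ} (E : Finset (Fin n × Fin n)) (f : Fin n → Fin n)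
    (r : {e : Fin n × Fin n // e ∈ E} → ℝ) (lam : ℝ) (u : Fin n → ℝ) : Prop :=
  ∀ i : Fin n, lam + u i = wt E r (i, f i) + u (f i)

/-- `(λ, u)` is the normalized solution of the zero-player equation: additionally `u`
vanishes at the smallest-index vertex of the cycle. For `(σ,τ) ∈ Ξ`, this characterizes
`(λ^{σ,τ}(r), u^{σ,τ}(r))`. -/
def IsNormalizedSol {n : ℕ} (E : Finset (Fin n × Fin n)) (f : Fin n → Fin n)
    (r : {e : Fin n × Fin n // e ∈ E} → ℝ) (lam : ℝ) (u : Fin n → ℝ) : Prop :=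
  IsZeroPlayerSol E f r lam u ∧
  ∃ k : Fin n, IsPeriodicVertex f k ∧ (∀ l, IsPeriodicVertex f l → k ≤ l) ∧ u k = 0

/-- The graph is ergodic: the ergodic equation is solvable for every choice of weights. -/
def IsErgodicGraph {n : ℕ} (E : Finset (Fin n × Fin n)) (VMax : Finset (Fin n)) : Prop :=
  ∀ r : {e : Fin n × Fin n // e ∈ E} → ℝ, ∃ lam u, IsErgodicSol E VMax r lam u


/-- The condition number `Δ(r)`. For `r ∈ U`, the solution `(λ, u)` of the ergodic
equation is unique up to an additive constant on `u`, and this quantity equals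
`max{|r_e − λ|} / min{|r_{ij} − λ + u_j − u_i| ≠ 0}`. -/
noncomputable def Delta {n : ℕ} (E : Finset (Fin n × Fin n)) (VMax : Finset (Fin n))
    (r : {e : Fin n × Fin n // e ∈ E} → ℝ) : ℝ :=
  sSup {d : ℝ | ∃ (lam : ℝ) (u : Fin n → ℝ), IsErgodicSol E VMax r lam u ∧
    d = sSup {v : ℝ | ∃ e : {e : Fin n × Fin n // e ∈ E}, v = |r e - lam|} /
        sInf {v : ℝ | ∃ e : {e : Fin n × Fin n // e ∈ E},
          v = |r e - lam + u e.1.2 - u e.1.1| ∧ v ≠ 0}}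

/-- `v` solves the Shapley equations of the discounted game with discount factor `γ`:
`v i = max_{(i,j) ∈ E} ((1−γ)r_{ij} + γ v j)` for `i ∈ VMax`, and the minimum for
`i ∈ VMin`. -/
def IsShapleySol {n : ℕ} (E : Finset (Fin n × Fin n)) (VMax : Finset (Fin n))
    (r : {e : Fin n × Fin n // e ∈ E} → ℝ) (γ : ℝ) (v : Fin n → ℝ) : Prop :=
  ∀ i : Fin n,
    (i ∈ VMax →
      IsGreatest {w : ℝ | ∃ j : Fin n, (i, j) ∈ E ∧
        w = (1 - γ) * wt E r (i, j) + γ * v j} (v i)) ∧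
    (i ∉ VMax →
      IsLeast {w : ℝ | ∃ j : Fin n, (i, j) ∈ E ∧
        w = (1 - γ) * wt E r (i, j) + γ * v j} (v i))



/-- Abel-type bound: if partial sums of `z` are bounded by `B`, then the geometric-weighted
series is bounded by `B`. -/
lemma abel_tsum_bound (γ B : ℝ) (h0 : 0 ≤ γ) (h1 : γ < 1) (z : ℕ → ℝ)
    (hS : ∀ m, |∑ t ∈ Finset.range m, z t| ≤ B) :
    Summable (fun t => γ ^ t * z t) ∧ |∑' t, γ ^ t * z t| ≤ B := by
  have hB : 0 ≤ B := le_trans (abs_nonneg _) (hS 0)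
  set S : ℕ → ℝ := fun m => ∑ t ∈ Finset.range m, z t with hSdef
  have hz : ∀ t, |z t| ≤ 2 * B := by
    intro t
    have : z t = S (t + 1) - S t := by simp [hSdef, Finset.sum_range_succ]
    rw [this]
    calc |S (t+1) - S t| ≤ |S (t+1)| + |S t| := abs_sub _ _
      _ ≤ 2 * B := by have := hS (t+1); have := hS t; linarith
  have hgeo : Summable (fun t : ℕ => γ ^ t) := summable_geometric_of_lt_one h0 h1
  have hsum : Summable (fun t => γ ^ t * z t) := by
    apply Summable.of_norm_bounded (g := fun t => (2*B) * γ ^ t) (hgeo.mul_left _)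
    intro t
    rw [Real.norm_eq_abs, abs_mul, abs_pow, abs_of_nonneg h0]
    calc γ ^ t * |z t| ≤ γ ^ t * (2*B) := by
          exact mul_le_mul_of_nonneg_left (hz t) (pow_nonneg h0 t)
      _ = 2*B * γ ^ t := by ring
  refine ⟨hsum, ?_⟩
  have hsumX : Summable (fun t => γ ^ t * S (t + 1)) := by
    apply Summable.of_norm_bounded (g := fun t => B * γ ^ t) (hgeo.mul_left _)
    intro t
    rw [Real.norm_eq_abs, abs_mul, abs_pow, abs_of_nonneg h0]
    calc γ ^ t * |S (t+1)| ≤ γ ^ t * B := mul_le_mul_of_nonneg_left (hS _) (pow_nonneg h0 t)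
      _ = B * γ ^ t := by ring
  set X := ∑' t, γ ^ t * S (t + 1) with hX
  set T := ∑' t, γ ^ t * z t with hT
  have hsumS : Summable (fun t => γ ^ t * S t) := by
    have := hsum.add hsumX
    -- γ^t * S t : S t = S (t+1) - z t
    have heq : (fun t => γ ^ t * S t) = fun t => γ ^ t * S (t+1) - γ ^ t * z t := by
      funext t
      have : S (t+1) = S t + z t := by simp [hSdef, Finset.sum_range_succ]
      rw [this]; ring
    rw [heq]; exact hsumX.sub hsum
  have key1 : X = (∑' t, γ ^ t * S t) + T := by
    rw [hX, hT, ← Summable.tsum_add hsumS hsum]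
    congr 1; funext t
    have : S (t+1) = S t + z t := by simp [hSdef, Finset.sum_range_succ]
    rw [this]; ring
  have key2 : (∑' t, γ ^ t * S t) = γ * X := by
    rw [Summable.tsum_eq_zero_add hsumS]
    have h0S : S 0 = 0 := by simp [hSdef]
    rw [h0S]
    simp only [mul_zero, zero_add]
    rw [hX, ← tsum_mul_left]
    congr 1; funext t; ring
  have hTX : T = (1 - γ) * X := by rw [key1, key2] at *; linarith [key1]
  have hXbound : |X| ≤ B / (1 - γ) := by
    have h1' : (0:ℝ) < 1 - γ := by linarith
    have : ‖X‖ ≤ ∑' t, ‖γ ^ t * S (t+1)‖ := norm_tsum_le_tsum_norm (by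
      simpa only [Real.norm_eq_abs] using hsumX.abs)
    have hle : (∑' t, ‖γ ^ t * S (t+1)‖) ≤ ∑' t, B * γ ^ t := by
      apply Summable.tsum_le_tsum _ (by simpa only [Real.norm_eq_abs] using hsumX.abs) (hgeo.mul_left _)
      intro t
      rw [Real.norm_eq_abs, abs_mul, abs_pow, abs_of_nonneg h0]
      calc γ ^ t * |S (t+1)| ≤ γ ^ t * B := mul_le_mul_of_nonneg_left (hS _) (pow_nonneg h0 t)
        _ = B * γ ^ t := by ring
    have hgeosum : (∑' t : ℕ, B * γ ^ t) = B / (1 - γ) := by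
      rw [tsum_mul_left, tsum_geometric_of_lt_one h0 h1]
      rw [div_eq_mul_inv]
    rw [Real.norm_eq_abs] at this
    calc |X| ≤ ∑' t, ‖γ ^ t * S (t+1)‖ := this
      _ ≤ ∑' t, B * γ ^ t := hle
      _ = B / (1-γ) := hgeosum
  rw [hTX, abs_mul, abs_of_nonneg (by linarith : (0:ℝ) ≤ 1 - γ)]
  calc (1-γ) * |X| ≤ (1-γ) * (B / (1-γ)) := by
        apply mul_le_mul_of_nonneg_left hXbound (by linarith)
    _ = B := by
        have h1' : (1:ℝ) - γ ≠ 0 := by linarith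
        field_simp

/-- partial sums of an eventually-periodic zero-period-sum sequence are bounded. -/
lemma partial_sum_bound (z : ℕ → ℝ) (U : ℝ) (a ℓ : ℕ) (hℓ : 0 < ℓ)
    (hbd : ∀ t, |z t| ≤ U)
    (hper : ∀ m, a ≤ m → ∑ s ∈ Finset.range ℓ, z (m + s) = 0) :
    ∀ m, |∑ t ∈ Finset.range m, z t| ≤ (a + ℓ) * U := by
  have hU : 0 ≤ U := le_trans (abs_nonneg _) (hbd 0)
  intro m
  induction m using Nat.strong_induction_on with
  | _ m ih =>
    by_cases hm : m ≤ a + ℓ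
    · calc |∑ t ∈ Finset.range m, z t| ≤ ∑ t ∈ Finset.range m, |z t| :=
            Finset.abs_sum_le_sum_abs _ _
        _ ≤ ∑ t ∈ Finset.range m, U := Finset.sum_le_sum (fun t _ => hbd t)
        _ = m * U := by rw [Finset.sum_const, Finset.card_range, nsmul_eq_mul]
        _ ≤ (a + ℓ) * U := by
            apply mul_le_mul_of_nonneg_right _ hU
            exact_mod_cast hm
    · push_neg at hm
      have hsplit : m = (m - ℓ) + ℓ := by omega
      have : ∑ t ∈ Finset.range m, z t = ∑ t ∈ Finset.range (m - ℓ), z t := by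
        conv_lhs => rw [hsplit]
        rw [Finset.sum_range_add, hper (m - ℓ) (by omega), add_zero]
      rw [this]
      exact ih (m - ℓ) (by omega)

/-- Sum of `u` over one period of the orbit is invariant under shifting the base point. -/
lemma orbit_sum_shift {α : Type*} (f : α → α) (u : α → ℝ) (ℓ : ℕ) (q : α)
    (hq : f^[ℓ] q = q) :
    ∑ s ∈ Finset.range ℓ, u (f^[s] (f q)) = ∑ s ∈ Finset.range ℓ, u (f^[s] q) := by
  have h1 : ∀ s, u (f^[s] (f q)) = u (f^[s+1] q) := by
    intro s; rw [Function.iterate_succ_apply]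
  simp only [h1]
  have h2 : ∑ s ∈ Finset.range ℓ, u (f^[s+1] q) =
      (∑ s ∈ Finset.range (ℓ+1), u (f^[s] q)) - u (f^[0] q) := by
    rw [Finset.sum_range_succ' (fun s => u (f^[s] q)) ℓ]
    ring
  rw [h2, Finset.sum_range_succ, hq]
  simp

lemma orbit_sum_iterate {α : Type*} (f : α → α) (u : α → ℝ) (ℓ : ℕ) (q : α)
    (hq : f^[ℓ] q = q) (k : ℕ) :
    ∑ s ∈ Finset.range ℓ, u (f^[s] (f^[k] q)) = ∑ s ∈ Finset.range ℓ, u (f^[s] q) := by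
  induction k with
  | zero => simp
  | succ k ih =>
    have hq' : f^[ℓ] (f^[k] q) = f^[k] q := by
      rw [← Function.iterate_add_apply, add_comm, Function.iterate_add_apply, hq]
    have := orbit_sum_shift f u ℓ (f^[k] q) hq'
    rw [Function.iterate_succ_apply'] at *
    rw [this, ih]

/-- telescoping step bound along the orbit. -/
lemma iterate_diff_bound {α : Type*} (f : α → α) (u : α → ℝ) (A : ℝ)
    (hstep : ∀ x, |u x - u (f x)| ≤ A) :
    ∀ (k : ℕ) (x : α), |u x - u (f^[k] x)| ≤ k * A := by
  intro k
  induction k with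
  | zero => intro x; simp
  | succ k ih =>
    intro x
    have h1 : u x - u (f^[k+1] x) = (u x - u (f^[k] x)) + (u (f^[k] x) - u (f (f^[k] x))) := by
      rw [Function.iterate_succ_apply']; ring
    rw [h1]
    calc |_ + _| ≤ |u x - u (f^[k] x)| + |u (f^[k] x) - u (f (f^[k] x))| := abs_add_le _ _
      _ ≤ k * A + A := add_le_add (ih x) (hstep _)
      _ = (k+1 : ℕ) * A := by push_cast; ring

/-- pigeonhole: eventual periodicity within `n` steps. -/
lemma exists_eventually_periodic {n : ℕ} (f : Fin n → Fin n) (i : Fin n) :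
    ∃ a ℓ : ℕ, 0 < ℓ ∧ a + ℓ ≤ n ∧ f^[ℓ] (f^[a] i) = f^[a] i := by
  have hn : 0 < n := i.pos
  have hcard : Fintype.card (Fin n) < Fintype.card (Fin (n+1)) := by simp
  obtain ⟨x, y, hxy, hfe⟩ := Fintype.exists_ne_map_eq_of_card_lt
    (fun t : Fin (n+1) => f^[(t:ℕ)] i) hcard
  rcases lt_or_gt_of_ne (show (x:ℕ) ≠ (y:ℕ) by exact_mod_cast fun h => hxy (Fin.ext h)) with h | h
  · refine ⟨x, y - x, by omega, by omega, ?_⟩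
    rw [← Function.iterate_add_apply]
    rw [show (y:ℕ) - (x:ℕ) + (x:ℕ) = (y:ℕ) by omega]
    exact hfe.symm
  · refine ⟨y, x - y, by omega, by omega, ?_⟩
    rw [← Function.iterate_add_apply]
    rw [show (x:ℕ) - (y:ℕ) + (y:ℕ) = (x:ℕ) by omega]
    exact hfe

section Aux

variable {n : ℕ} {E : Finset (Fin n × Fin n)} {VMax : Finset (Fin n)}
  {r : {e : Fin n × Fin n // e ∈ E} → ℝ}
  {σ : {i : Fin n // i ∈ VMax} → Fin n} {τ : {i : Fin n // i ∉ VMax} → Fin n}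

lemma IsErgodicSol.shift {lam : ℝ} {u : Fin n → ℝ} (h : IsErgodicSol E VMax r lam u) (c : ℝ) :
    IsErgodicSol E VMax r lam (fun x => u x - c) := by
  intro i
  constructor
  · intro hi
    obtain ⟨⟨j, hj, hje⟩, hub⟩ := (h i).1 hi
    constructor
    · exact ⟨j, hj, by dsimp; linarith⟩
    · rintro v ⟨j', hj', rfl⟩
      have := hub ⟨j', hj', rfl⟩
      dsimp; linarith
  · intro hi
    obtain ⟨⟨j, hj, hje⟩, hlb⟩ := (h i).2 hi
    constructor
    · exact ⟨j, hj, by dsimp; linarith⟩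
    · rintro v ⟨j', hj', rfl⟩
      have := hlb ⟨j', hj', rfl⟩
      dsimp; linarith

lemma Induces.shift {u : Fin n → ℝ} (h : Induces E VMax r u σ τ) (c : ℝ) :
    Induces E VMax r (fun x => u x - c) σ τ := by
  obtain ⟨h1, h2, h3, h4⟩ := h
  refine ⟨h1, h2, ?_, ?_⟩
  · intro i
    obtain ⟨hmem, hub⟩ := h3 i
    constructor
    · obtain ⟨j, hj, hje⟩ := hmem
      exact ⟨j, hj, by dsimp; linarith⟩
    · rintro v ⟨j', hj', rfl⟩
      have := hub ⟨j', hj', rfl⟩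
      dsimp; linarith
  · intro i
    obtain ⟨hmem, hlb⟩ := h4 i
    constructor
    · obtain ⟨j, hj, hje⟩ := hmem
      exact ⟨j, hj, by dsimp; linarith⟩
    · rintro v ⟨j', hj', rfl⟩
      have := hlb ⟨j', hj', rfl⟩
      dsimp; linarith

/-- the zero-player equation along the subgraph chosen by induced policies -/
lemma zero_player {lam : ℝ} {u : Fin n → ℝ} (hsol : IsErgodicSol E VMax r lam u)
    (hind : Induces E VMax r u σ τ) (i : Fin n) :
    (i, combine VMax σ τ i) ∈ E ∧
      lam + u i = wt E r (i, combine VMax σ τ i) + u (combine VMax σ τ i) := by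
  by_cases h : i ∈ VMax
  · have hc : combine VMax σ τ i = σ ⟨i, h⟩ := dif_pos h
    rw [hc]
    refine ⟨hind.1 ⟨i, h⟩, ?_⟩
    exact ((hsol i).1 h).unique (hind.2.2.1 ⟨i, h⟩)
  · have hc : combine VMax σ τ i = τ ⟨i, h⟩ := dif_neg h
    rw [hc]
    refine ⟨hind.2.1 ⟨i, h⟩, ?_⟩
    exact ((hsol i).2 h).unique (hind.2.2.2 ⟨i, h⟩)

/-- only the policy edge attains the optimum (for Max vertices). -/
lemma unique_argmax (hr : r ∈ Pcell E VMax σ τ) {lam : ℝ} {u : Fin n → ℝ}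
    (hsol : IsErgodicSol E VMax r lam u) (hind : Induces E VMax r u σ τ)
    (i : Fin n) (h : i ∈ VMax) (j : Fin n) (hj : (i, j) ∈ E)
    (heq : lam + u i = wt E r (i, j) + u j) : j = σ ⟨i, h⟩ := by
  by_contra hne
  set σ' : {i : Fin n // i ∈ VMax} → Fin n := fun k => if k.1 = i then j else σ k with hσ'
  have hind' : Induces E VMax r u σ' τ := by
    refine ⟨?_, hind.2.1, ?_, hind.2.2.2⟩
    · intro k
      by_cases hk : k.1 = i
      · simp only [hσ', hk, if_pos]
        exact hj
      · simp only [hσ', hk, if_neg, ite_false]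
        exact hind.1 k
    · intro k
      by_cases hk : k.1 = i
      · have hσk : σ' k = j := by simp [hσ', hk]
        rw [hσk, hk, ← heq]
        exact (hsol i).1 (hk ▸ k.2)
      · have hσk : σ' k = σ k := by simp [hσ', hk]
        rw [hσk]
        exact hind.2.2.1 k
  have := (hr.2 σ' τ ⟨lam, u, hsol, hind'⟩).1
  have : σ' ⟨i, h⟩ = σ ⟨i, h⟩ := by rw [this]
  simp only [hσ', if_pos] at this
  exact hne this

lemma unique_argmin (hr : r ∈ Pcell E VMax σ τ) {lam : ℝ} {u : Fin n → ℝ}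
    (hsol : IsErgodicSol E VMax r lam u) (hind : Induces E VMax r u σ τ)
    (i : Fin n) (h : i ∉ VMax) (j : Fin n) (hj : (i, j) ∈ E)
    (heq : lam + u i = wt E r (i, j) + u j) : j = τ ⟨i, h⟩ := by
  by_contra hne
  set τ' : {i : Fin n // i ∉ VMax} → Fin n := fun k => if k.1 = i then j else τ k with hτ'
  have hind' : Induces E VMax r u σ τ' := by
    refine ⟨hind.1, ?_, hind.2.2.1, ?_⟩
    · intro k
      by_cases hk : k.1 = i
      · simp only [hτ', hk, if_pos]
        exact hj
      · simp only [hτ', hk, if_neg, ite_false]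
        exact hind.2.1 k
    · intro k
      by_cases hk : k.1 = i
      · have hτk : τ' k = j := by simp [hτ', hk]
        rw [hτk, hk, ← heq]
        exact (hsol i).2 (hk ▸ k.2)
      · have hτk : τ' k = τ k := by simp [hτ', hk]
        rw [hτk]
        exact hind.2.2.2 k
  have := (hr.2 σ τ' ⟨lam, u, hsol, hind'⟩).2
  have : τ' ⟨i, h⟩ = τ ⟨i, h⟩ := by rw [this]
  simp only [hτ', if_pos] at this
  exact hne this

/-- every ergodic solution induces `(σ, τ)`. -/
lemma sol_induces (hr : r ∈ Pcell E VMax σ τ) {lam' : ℝ} {u' : Fin n → ℝ}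
    (hsol' : IsErgodicSol E VMax r lam' u') : Induces E VMax r u' σ τ := by
  have hex1 : ∀ k : {i : Fin n // i ∈ VMax},
      ∃ j, (k.1, j) ∈ E ∧ lam' + u' k.1 = wt E r (k.1, j) + u' j := fun k =>
    ((hsol' k.1).1 k.2).1
  have hex2 : ∀ k : {i : Fin n // i ∉ VMax},
      ∃ j, (k.1, j) ∈ E ∧ lam' + u' k.1 = wt E r (k.1, j) + u' j := fun k =>
    ((hsol' k.1).2 k.2).1
  set σ'' : {i : Fin n // i ∈ VMax} → Fin n := fun k => (hex1 k).choose with hσ''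
  set τ'' : {i : Fin n // i ∉ VMax} → Fin n := fun k => (hex2 k).choose with hτ''
  have hind'' : Induces E VMax r u' σ'' τ'' := by
    refine ⟨fun k => (hex1 k).choose_spec.1, fun k => (hex2 k).choose_spec.1, ?_, ?_⟩
    · intro k
      rw [← (hex1 k).choose_spec.2]
      exact (hsol' k.1).1 k.2
    · intro k
      rw [← (hex2 k).choose_spec.2]
      exact (hsol' k.1).2 k.2
  obtain ⟨hs, ht⟩ := hr.2 σ'' τ'' ⟨lam', u', hsol', hind''⟩
  rw [← hs, ← ht]
  exact hind''

/-- uniqueness of the ergodic constant. -/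
lemma lam_le (hn : 0 < n) {lam lam' : ℝ} {u u' : Fin n → ℝ}
    (hsol : IsErgodicSol E VMax r lam u) (hsol' : IsErgodicSol E VMax r lam' u') :
    lam ≤ lam' := by
  haveI : Nonempty (Fin n) := ⟨⟨0, hn⟩⟩
  obtain ⟨i, hmax⟩ := Finite.exists_max (fun x => u x - u' x)
  by_cases h : i ∈ VMax
  · obtain ⟨j, hj, hje⟩ := ((hsol i).1 h).1
    have h2 := ((hsol' i).1 h).2 ⟨j, hj, rfl⟩
    have := hmax j
    linarith
  · obtain ⟨j, hj, hje⟩ := ((hsol' i).2 h).1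
    have h2 := ((hsol i).2 h).2 ⟨j, hj, rfl⟩
    have := hmax j
    linarith

end Aux

section Aux2

variable {n : ℕ} {E : Finset (Fin n × Fin n)} {VMax : Finset (Fin n)}
  {r : {e : Fin n × Fin n // e ∈ E} → ℝ}
  {σ : {i : Fin n // i ∈ VMax} → Fin n} {τ : {i : Fin n // i ∉ VMax} → Fin n}

lemma bias_diff_const (hr : r ∈ Pcell E VMax σ τ) (hXi : InXi E VMax σ τ)
    {lam lam' : ℝ} {u u' : Fin n → ℝ}
    (hsol : IsErgodicSol E VMax r lam u) (hsol' : IsErgodicSol E VMax r lam' u')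
    (x y : Fin n) : u x - u' x = u y - u' y := by
  have hn : 0 < n := x.pos
  have hll : lam = lam' := le_antisymm (lam_le hn hsol hsol') (lam_le hn hsol' hsol)
  have hi : Induces E VMax r u σ τ := sol_induces hr hsol
  have hi' : Induces E VMax r u' σ τ := sol_induces hr hsol'
  set f := combine VMax σ τ with hf
  have hstep : ∀ i, u i - u' i = u (f i) - u' (f i) := by
    intro i
    have h1 := (zero_player hsol hi i).2
    have h2 := (zero_player hsol' hi' i).2
    rw [← hll] at h2
    rw [← hf] at h1 h2
    linarith
  have hiter : ∀ (k : ℕ) (i : Fin n), u i - u' i = u (f^[k] i) - u' (f^[k] i) := by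
    intro k
    induction k with
    | zero => intro i; simp
    | succ k ih =>
      intro i
      rw [Function.iterate_succ_apply']
      rw [ih i, hstep (f^[k] i)]
  obtain ⟨ax, ℓx, hℓx, _, hpx⟩ := exists_eventually_periodic f x
  obtain ⟨ay, ℓy, hℓy, _, hpy⟩ := exists_eventually_periodic f y
  obtain ⟨k, hk⟩ := hXi.2.2 (f^[ax] x) (f^[ay] y) ⟨ℓx, hℓx, hpx⟩ ⟨ℓy, hℓy, hpy⟩
  calc u x - u' x = u (f^[ax] x) - u' (f^[ax] x) := hiter ax x
    _ = u (f^[k] (f^[ax] x)) - u' (f^[k] (f^[ax] x)) := hiter k _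
    _ = u (f^[ay] y) - u' (f^[ay] y) := by rw [hk]
    _ = u y - u' y := (hiter ay y).symm

lemma delta_eq (hn : 0 < n) (hr : r ∈ Pcell E VMax σ τ) (hXi : InXi E VMax σ τ)
    {lam : ℝ} {u : Fin n → ℝ} (hsol : IsErgodicSol E VMax r lam u) :
    Delta E VMax r =
      sSup {v : ℝ | ∃ e : {e : Fin n × Fin n // e ∈ E}, v = |r e - lam|} /
        sInf {v : ℝ | ∃ e : {e : Fin n × Fin n // e ∈ E},
          v = |r e - lam + u e.1.2 - u e.1.1| ∧ v ≠ 0} := by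
  set d0 := sSup {v : ℝ | ∃ e : {e : Fin n × Fin n // e ∈ E}, v = |r e - lam|} /
        sInf {v : ℝ | ∃ e : {e : Fin n × Fin n // e ∈ E},
          v = |r e - lam + u e.1.2 - u e.1.1| ∧ v ≠ 0} with hd0
  have hset : {d : ℝ | ∃ (lam' : ℝ) (u' : Fin n → ℝ), IsErgodicSol E VMax r lam' u' ∧
      d = sSup {v : ℝ | ∃ e : {e : Fin n × Fin n // e ∈ E}, v = |r e - lam'|} /
        sInf {v : ℝ | ∃ e : {e : Fin n × Fin n // e ∈ E},
          v = |r e - lam' + u' e.1.2 - u' e.1.1| ∧ v ≠ 0}} = {d0} := by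
    apply Set.eq_singleton_iff_unique_mem.mpr
    constructor
    · exact ⟨lam, u, hsol, hd0⟩
    · rintro d ⟨lam', u', hsol', rfl⟩
      have hll : lam' = lam := le_antisymm (lam_le hn hsol' hsol) (lam_le hn hsol hsol')
      have hcd : ∀ i j : Fin n, u' j - u' i = u j - u i := by
        intro i j
        have := bias_diff_const hr hXi hsol' hsol j i
        linarith
      rw [hd0, hll]
      have hfun : ∀ e : {e : Fin n × Fin n // e ∈ E},
          |r e - lam + u' e.1.2 - u' e.1.1| = |r e - lam + u e.1.2 - u e.1.1| := by
        intro e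
        congr 1
        have := hcd e.1.1 e.1.2
        linarith
      congr 2
      ext v
      simp only [hfun]
  unfold Delta
  rw [hset, csSup_singleton]

end Aux2

section Aux3

variable {n : ℕ} {E : Finset (Fin n × Fin n)} {VMax : Finset (Fin n)}
  {r : {e : Fin n × Fin n // e ∈ E} → ℝ}
  {σ : {i : Fin n // i ∈ VMax} → Fin n} {τ : {i : Fin n // i ∉ VMax} → Fin n}

lemma shapley_le {γ : ℝ} (hγ0 : 0 ≤ γ) (hγ1 : γ < 1) {p q : Fin n → ℝ}
    (hp : IsShapleySol E VMax r γ p) (hq : IsShapleySol E VMax r γ q) (x : Fin n) :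
    p x ≤ q x := by
  haveI : Nonempty (Fin n) := ⟨x⟩
  obtain ⟨i, hmax⟩ := Finite.exists_max (fun y => p y - q y)
  have hkey : p i - q i ≤ 0 := by
    by_cases h : i ∈ VMax
    · obtain ⟨j, hj, hje⟩ := ((hp i).1 h).1
      have h2 := ((hq i).1 h).2 ⟨j, hj, rfl⟩
      have h3 := hmax j
      nlinarith
    · obtain ⟨j, hj, hje⟩ := ((hq i).2 h).1
      have h2 := ((hp i).2 h).2 ⟨j, hj, rfl⟩
      have h3 := hmax j
      nlinarith
  have := hmax x
  linarith

lemma shapley_unique {γ : ℝ} (hγ0 : 0 ≤ γ) (hγ1 : γ < 1) {p q : Fin n → ℝ}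
    (hp : IsShapleySol E VMax r γ p) (hq : IsShapleySol E VMax r γ q) : p = q :=
  funext fun x => le_antisymm (shapley_le hγ0 hγ1 hp hq x) (shapley_le hγ0 hγ1 hq hp x)

end Aux3

section Core

variable {n : ℕ} {E : Finset (Fin n × Fin n)} {VMax : Finset (Fin n)}
  {r : {e : Fin n × Fin n // e ∈ E} → ℝ}
  {σ : {i : Fin n // i ∈ VMax} → Fin n} {τ : {i : Fin n // i ∉ VMax} → Fin n}

set_option maxHeartbeats 1000000 in
lemma core (hXi : InXi E VMax σ τ) (hr : r ∈ Pcell E VMax σ τ)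
    {γ : ℝ} (hγ1 : γ < 1) (hγ2 : 1 - 1 / (6 * n ^ 2 * Delta E VMax r) < γ)
    {v : Fin n → ℝ} (hv : IsShapleySol E VMax r γ v) :
    ∀ i j : Fin n, (i, j) ∈ E →
      (v i = (1 - γ) * wt E r (i, j) + γ * v j ↔ j = combine VMax σ τ i) := by
  set f := combine VMax σ τ with hf
  by_cases heasy : ∀ i j : Fin n, (i, j) ∈ E → j = f i
  · -- degenerate case: every edge is the chosen edge
    intro i j hj
    constructor
    · intro _; exact heasy i j hj
    · intro hje
      by_cases h : i ∈ VMax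
      · obtain ⟨j', hj', he'⟩ := ((hv i).1 h).1
        rwa [heasy i j' hj', ← hje] at he'
      · obtain ⟨j', hj', he'⟩ := ((hv i).2 h).1
        rwa [heasy i j' hj', ← hje] at he'
  push_neg at heasy
  obtain ⟨i0, j0, hj0E, hj0ne⟩ := heasy
  have hn : 0 < n := i0.pos
  obtain ⟨lam, u0, hsol0, hind0⟩ := hr.1
  -- choose a base periodic vertex and minimal cycle length
  obtain ⟨a1, ℓ1, hℓ1, hle1, hp1⟩ := exists_eventually_periodic f (⟨0, hn⟩ : Fin n)
  set c1 := f^[a1] (⟨0, hn⟩ : Fin n) with hc1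
  have hex : ∃ k, 0 < k ∧ f^[k] c1 = c1 := ⟨ℓ1, hℓ1, hp1⟩
  set ℓ0 := Nat.find hex with hℓ0def
  obtain ⟨hℓ0pos, hc1fix⟩ : 0 < ℓ0 ∧ f^[ℓ0] c1 = c1 := Nat.find_spec hex
  have hc1per : IsPeriodicVertex f c1 := ⟨ℓ0, hℓ0pos, hc1fix⟩
  -- ℓ0 is a period of every periodic vertex, and minimal among all periods
  have hperiod_all : ∀ p, IsPeriodicVertex f p → f^[ℓ0] p = p := by
    intro p hp
    obtain ⟨k, hk⟩ := hXi.2.2 c1 p hc1per hp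
    rw [← hk, ← Function.iterate_add_apply, add_comm, Function.iterate_add_apply, hc1fix]
  have hℓ0min : ∀ (p : Fin n) (ℓ : ℕ), IsPeriodicVertex f p → 0 < ℓ → f^[ℓ] p = p → ℓ0 ≤ ℓ := by
    intro p ℓ hp hℓ hfix
    obtain ⟨k, hk⟩ := hXi.2.2 p c1 hp hc1per
    have : f^[ℓ] c1 = c1 := by
      rw [← hk, ← Function.iterate_add_apply, add_comm, Function.iterate_add_apply, hfix]
    exact Nat.find_le ⟨hℓ, this⟩
  have hper_iter : ∀ (p : Fin n), IsPeriodicVertex f p → ∀ j : ℕ, IsPeriodicVertex f (f^[j] p) := by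
    intro p hp j
    refine ⟨ℓ0, hℓ0pos, ?_⟩
    rw [← Function.iterate_add_apply, add_comm, Function.iterate_add_apply, hperiod_all p hp]
  -- normalize the bias
  set cbar := (∑ s ∈ Finset.range ℓ0, u0 (f^[s] c1)) / ℓ0 with hcbar
  set u : Fin n → ℝ := fun x => u0 x - cbar with hu
  have hsol : IsErgodicSol E VMax r lam u := hsol0.shift cbar
  have hind : Induces E VMax r u σ τ := hind0.shift cbar
  have hzp : ∀ i : Fin n, (i, f i) ∈ E ∧ lam + u i = wt E r (i, f i) + u (f i) :=
    fun i => zero_player hsol hind i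
  have hmean : ∑ s ∈ Finset.range ℓ0, u (f^[s] c1) = 0 := by
    simp only [hu]
    rw [Finset.sum_sub_distrib, Finset.sum_const, Finset.card_range, nsmul_eq_mul, hcbar]
    have : (ℓ0 : ℝ) ≠ 0 := by positivity
    field_simp
    ring
  have hmean_all : ∀ p, IsPeriodicVertex f p → ∑ s ∈ Finset.range ℓ0, u (f^[s] p) = 0 := by
    intro p hp
    obtain ⟨k, hk⟩ := hXi.2.2 c1 p hc1per hp
    rw [← hk, orbit_sum_iterate f u ℓ0 c1 hc1fix k, hmean]
  -- the numerator bound A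
  set A := sSup {v : ℝ | ∃ e : {e : Fin n × Fin n // e ∈ E}, v = |r e - lam|} with hA
  have hEne : Nonempty {e : Fin n × Fin n // e ∈ E} := ⟨⟨(i0, j0), hj0E⟩⟩
  have hAset : {v : ℝ | ∃ e : {e : Fin n × Fin n // e ∈ E}, v = |r e - lam|} =
      Set.range (fun e : {e : Fin n × Fin n // e ∈ E} => |r e - lam|) := by
    ext v; simp [eq_comm]
  have hAub : ∀ e : {e : Fin n × Fin n // e ∈ E}, |r e - lam| ≤ A := by
    intro e
    have hbdd : BddAbove {v : ℝ | ∃ e : {e : Fin n × Fin n // e ∈ E}, v = |r e - lam|} := by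
      rw [hAset]; exact (Set.finite_range _).bddAbove
    exact le_csSup hbdd ⟨e, rfl⟩
  have hA0 : 0 ≤ A := le_trans (abs_nonneg _) (hAub ⟨(i0, j0), hj0E⟩)
  have hstep : ∀ x : Fin n, |u x - u (f x)| ≤ A := by
    intro x
    obtain ⟨hxE, hxe⟩ := hzp x
    have : u x - u (f x) = r ⟨(x, f x), hxE⟩ - lam := by
      rw [show wt E r (x, f x) = r ⟨(x, f x), hxE⟩ from dif_pos hxE] at hxe
      linarith
    rw [this]; exact hAub _
  have hdiff : ∀ (k : ℕ) (x : Fin n), |u x - u (f^[k] x)| ≤ k * A :=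
    iterate_diff_bound f u A hstep
  -- bound |u| ≤ n A
  have hU0 : ∀ x : Fin n, |u x| ≤ n * A := by
    intro x
    obtain ⟨a, ℓ, hℓ, hale, hpfix⟩ := exists_eventually_periodic f x
    set p := f^[a] x with hp
    have hpper : IsPeriodicVertex f p := ⟨ℓ, hℓ, hpfix⟩
    have hℓℓ0 : ℓ0 ≤ ℓ := hℓ0min p ℓ hpper hℓ hpfix
    have hup : |u p| ≤ ((ℓ0 : ℝ) - 1) * A := by
      have hsum0 : ∑ s ∈ Finset.range ℓ0, u (f^[s] p) = 0 := hmean_all p hpper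
      have hid : (ℓ0 : ℝ) * u p = ∑ s ∈ Finset.range ℓ0, (u p - u (f^[s] p)) := by
        rw [Finset.sum_sub_distrib, hsum0, Finset.sum_const, Finset.card_range, nsmul_eq_mul]
        ring
      have hbd : |(ℓ0 : ℝ) * u p| ≤ (ℓ0 : ℝ) * (((ℓ0 : ℝ) - 1) * A) := by
        rw [hid]
        calc |∑ s ∈ Finset.range ℓ0, (u p - u (f^[s] p))|
            ≤ ∑ s ∈ Finset.range ℓ0, |u p - u (f^[s] p)| := Finset.abs_sum_le_sum_abs _ _
          _ ≤ ∑ s ∈ Finset.range ℓ0, ((ℓ0 : ℝ) - 1) * A := by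
              apply Finset.sum_le_sum
              intro s hs
              calc |u p - u (f^[s] p)| ≤ s * A := hdiff s p
                _ ≤ ((ℓ0 : ℝ) - 1) * A := by
                    apply mul_le_mul_of_nonneg_right _ hA0
                    have : s < ℓ0 := Finset.mem_range.mp hs
                    have : (s : ℝ) ≤ (ℓ0 : ℝ) - 1 := by
                      have : (s : ℝ) + 1 ≤ (ℓ0 : ℝ) := by exact_mod_cast this
                      linarith
                    exact this
          _ = (ℓ0 : ℝ) * (((ℓ0 : ℝ) - 1) * A) := by
              rw [Finset.sum_const, Finset.card_range, nsmul_eq_mul]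
      have hℓ0R : (0 : ℝ) < ℓ0 := by exact_mod_cast hℓ0pos
      rw [abs_mul, abs_of_pos hℓ0R] at hbd
      exact (mul_le_mul_iff_right₀ hℓ0R).mp hbd
    calc |u x| = |(u x - u p) + u p| := by ring_nf
      _ ≤ |u x - u p| + |u p| := abs_add_le _ _
      _ ≤ a * A + ((ℓ0 : ℝ) - 1) * A := add_le_add (hdiff a x) hup
      _ ≤ n * A := by
          have h1 : (a : ℝ) + (ℓ0 : ℝ) ≤ n := by
            have : a + ℓ0 ≤ n := le_trans (by omega) hale
            exact_mod_cast this
          nlinarith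
  -- partial sums of u along orbits are bounded by n^2 A
  have hPS : ∀ (x : Fin n) (m : ℕ),
      |∑ t ∈ Finset.range m, u (f^[t + 1] x)| ≤ (n : ℝ) * ((n : ℝ) * A) := by
    intro x m
    obtain ⟨a, ℓ, hℓ, hale, hpfix⟩ := exists_eventually_periodic f x
    have hpper : IsPeriodicVertex f (f^[a] x) := ⟨ℓ, hℓ, hpfix⟩
    have hℓℓ0 : ℓ0 ≤ ℓ := hℓ0min _ ℓ hpper hℓ hpfix
    have hper : ∀ m', a ≤ m' → ∑ s ∈ Finset.range ℓ0, u (f^[m' + s + 1] x) = 0 := by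
      intro m' hm'
      have hx' : IsPeriodicVertex f (f^[m' + 1] x) := by
        have : f^[m' + 1] x = f^[m' + 1 - a] (f^[a] x) := by
          rw [← Function.iterate_add_apply]
          congr 1; omega
        rw [this]
        exact hper_iter _ hpper _
      have := hmean_all _ hx'
      rw [← this]
      apply Finset.sum_congr rfl
      intro s _
      congr 1
      rw [← Function.iterate_add_apply]
      congr 1; omega
    have := partial_sum_bound (fun t => u (f^[t + 1] x)) ((n : ℝ) * A) a ℓ0 hℓ0pos
      (fun t => hU0 _) hper m
    calc |∑ t ∈ Finset.range m, u (f^[t + 1] x)| ≤ ((a : ℝ) + (ℓ0 : ℝ)) * ((n : ℝ) * A) := by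
          exact_mod_cast this
      _ ≤ (n : ℝ) * ((n : ℝ) * A) := by
          have h1 : (a : ℝ) + (ℓ0 : ℝ) ≤ n := by
            have : a + ℓ0 ≤ n := le_trans (by omega) hale
            exact_mod_cast this
          have h2 : 0 ≤ (n : ℝ) * A := by positivity
          nlinarith
  -- separation
  set Sden := {v : ℝ | ∃ e : {e : Fin n × Fin n // e ∈ E},
      v = |r e - lam + u e.1.2 - u e.1.1| ∧ v ≠ 0} with hSden
  have hSsub : Sden ⊆ Set.range
      (fun e : {e : Fin n × Fin n // e ∈ E} => |r e - lam + u e.1.2 - u e.1.1|) := by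
    rintro x ⟨e, rfl, -⟩; exact ⟨e, rfl⟩
  have hSfin : Sden.Finite := Set.Finite.subset (Set.finite_range _) hSsub
  set sep := sInf Sden with hsepdef
  have hSne : Sden.Nonempty := by
    refine ⟨|r ⟨(i0, j0), hj0E⟩ - lam + u j0 - u i0|, ⟨(i0, j0), hj0E⟩, rfl, ?_⟩
    rw [abs_ne_zero]
    intro h0
    have hwt : wt E r (i0, j0) = r ⟨(i0, j0), hj0E⟩ := dif_pos hj0E
    have heq0 : lam + u i0 = wt E r (i0, j0) + u j0 := by rw [hwt]; linarith
    by_cases h : i0 ∈ VMax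
    · have := unique_argmax hr hsol hind i0 h j0 hj0E heq0
      exact hj0ne (by rw [this, hf]; exact (show combine VMax σ τ i0 = σ ⟨i0, h⟩ from dif_pos h).symm)
    · have := unique_argmin hr hsol hind i0 h j0 hj0E heq0
      exact hj0ne (by rw [this, hf]; exact (show combine VMax σ τ i0 = τ ⟨i0, h⟩ from dif_neg h).symm)
  have hsep_mem : sep ∈ Sden := hSne.csInf_mem hSfin
  have hsep_pos : 0 < sep := by
    obtain ⟨e, he, hne⟩ := hsep_mem
    rw [he] at hne ⊢
    exact lt_of_le_of_ne (abs_nonneg _) (Ne.symm hne)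
  have hsep_le : ∀ e : {e : Fin n × Fin n // e ∈ E},
      |r e - lam + u e.1.2 - u e.1.1| ≠ 0 → sep ≤ |r e - lam + u e.1.2 - u e.1.1| :=
    fun e hne => csInf_le hSfin.bddBelow ⟨e, rfl, hne⟩
  -- gap bounds
  have hgapMax : ∀ (x : Fin n) (h : x ∈ VMax) (j : Fin n), (x, j) ∈ E → j ≠ σ ⟨x, h⟩ →
      sep ≤ lam + u x - wt E r (x, j) - u j := by
    intro x h j hj hne
    have hwt : wt E r (x, j) = r ⟨(x, j), hj⟩ := dif_pos hj
    have hub : wt E r (x, j) + u j ≤ lam + u x := ((hsol x).1 h).2 ⟨j, hj, rfl⟩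
    have hne0 : r ⟨(x, j), hj⟩ - lam + u j - u x ≠ 0 := by
      intro h0
      exact hne (unique_argmax hr hsol hind x h j hj (by rw [hwt]; linarith))
    have := hsep_le ⟨(x, j), hj⟩ (by simpa using abs_ne_zero.mpr hne0)
    have habs : |r ⟨(x, j), hj⟩ - lam + u j - u x| = lam + u x - wt E r (x, j) - u j := by
      rw [abs_of_nonpos (by rw [← hwt] at *; linarith), hwt]; ring
    simp only [habs] at this
    convert this using 2
  have hgapMin : ∀ (x : Fin n) (h : x ∉ VMax) (j : Fin n), (x, j) ∈ E → j ≠ τ ⟨x, h⟩ →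
      sep ≤ wt E r (x, j) + u j - (lam + u x) := by
    intro x h j hj hne
    have hwt : wt E r (x, j) = r ⟨(x, j), hj⟩ := dif_pos hj
    have hlb : lam + u x ≤ wt E r (x, j) + u j := ((hsol x).2 h).2 ⟨j, hj, rfl⟩
    have hne0 : r ⟨(x, j), hj⟩ - lam + u j - u x ≠ 0 := by
      intro h0
      exact hne (unique_argmin hr hsol hind x h j hj (by rw [hwt]; linarith))
    have := hsep_le ⟨(x, j), hj⟩ (by simpa using abs_ne_zero.mpr hne0)
    have habs : |r ⟨(x, j), hj⟩ - lam + u j - u x| = wt E r (x, j) + u j - (lam + u x) := by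
      rw [abs_of_nonneg (by rw [← hwt] at *; linarith), hwt]; ring
    simp only [habs] at this
    convert this using 2
  -- A is positive, sep ≤ (2n+1) A
  have hn1 : (1 : ℝ) ≤ (n : ℝ) := by exact_mod_cast hn
  have hsepA : sep ≤ A + ((n : ℝ) * A + (n : ℝ) * A) := by
    obtain ⟨e, he, -⟩ := hsep_mem
    rw [he]
    calc |r e - lam + u e.1.2 - u e.1.1| = |(r e - lam) + (u e.1.2 - u e.1.1)| := by ring_nf
      _ ≤ |r e - lam| + |u e.1.2 - u e.1.1| := abs_add_le _ _
      _ ≤ |r e - lam| + (|u e.1.2| + |u e.1.1|) := by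
          have := abs_sub (u e.1.2) (u e.1.1)
          linarith
      _ ≤ A + ((n : ℝ) * A + (n : ℝ) * A) :=
          add_le_add (hAub e) (add_le_add (hU0 _) (hU0 _))
  have hApos : 0 < A := by
    rcases lt_or_eq_of_le hA0 with h | h
    · exact h
    · exfalso; rw [← h] at hsepA; simp at hsepA; linarith
  -- discount factor estimates
  have hdelta : Delta E VMax r = A / sep := delta_eq hn hr hXi hsol
  have hδpos : 0 < 1 - γ := by linarith
  have h6pos : (0 : ℝ) < 6 * (n : ℝ) ^ 2 * A := by positivity
  have hδ6 : (1 - γ) * (6 * (n : ℝ) ^ 2 * A) < sep := by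
    rw [hdelta] at hγ2
    have hAs : (0 : ℝ) < 6 * (n : ℝ) ^ 2 * (A / sep) := by positivity
    have heq : 1 / (6 * (n : ℝ) ^ 2 * (A / sep)) = sep / (6 * (n : ℝ) ^ 2 * A) := by
      field_simp
    rw [heq] at hγ2
    have : 1 - γ < sep / (6 * (n : ℝ) ^ 2 * A) := by linarith
    calc (1 - γ) * (6 * (n : ℝ) ^ 2 * A)
        < (sep / (6 * (n : ℝ) ^ 2 * A)) * (6 * (n : ℝ) ^ 2 * A) := by
          exact mul_lt_mul_of_pos_right this h6pos
      _ = sep := by field_simp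
  have hγ0 : 0 ≤ γ := by nlinarith
  -- the correction term T
  have habel : ∀ x : Fin n, Summable (fun t => γ ^ t * u (f^[t + 1] x)) ∧
      |∑' t, γ ^ t * u (f^[t + 1] x)| ≤ (n : ℝ) * ((n : ℝ) * A) :=
    fun x => abel_tsum_bound γ _ hγ0 hγ1 _ (hPS x)
  set T : Fin n → ℝ := fun x => ∑' t, γ ^ t * u (f^[t + 1] x) with hTdef
  have hTbd : ∀ x, |T x| ≤ (n : ℝ) * ((n : ℝ) * A) := fun x => (habel x).2
  have hTrec : ∀ x, T x = u (f x) + γ * T (f x) := by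
    intro x
    show (∑' t, γ ^ t * u (f^[t + 1] x)) = _
    rw [Summable.tsum_eq_zero_add (habel x).1]
    congr 1
    · simp
    · rw [hTdef]
      dsimp only
      rw [← tsum_mul_left]
      congr 1; funext t
      rw [Function.iterate_succ_apply f (t + 1) x]
      ring
  -- the discounted value of the policy pair
  set w : Fin n → ℝ := fun x => lam + (1 - γ) * u x - (1 - γ) ^ 2 * T x with hwdef
  have hwrec : ∀ x, w x = (1 - γ) * wt E r (x, f x) + γ * w (f x) := by
    intro x
    have h1 := (hzp x).2
    have h2 := hTrec x
    simp only [hwdef]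
    rw [show wt E r (x, f x) = lam + u x - u (f x) by linarith]
    linear_combination (-(1 - γ)^2) * h2
  have hkey : ∀ (x j : Fin n), (x, j) ∈ E →
      w x - ((1 - γ) * wt E r (x, j) + γ * w j) =
        (1 - γ) * (lam + u x - wt E r (x, j) - u j) +
          (1 - γ) ^ 2 * (u j - T x + γ * T j) := by
    intro x j _
    simp only [hwdef]
    ring
  have hsmall : ∀ x j : Fin n, |u j - T x + γ * T j| ≤ 3 * (n : ℝ) ^ 2 * A := by
    intro x j
    have h1 := hU0 j
    have h2 := hTbd x
    have h3 := hTbd j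
    have h4 : |γ * T j| = γ * |T j| := by rw [abs_mul, abs_of_nonneg hγ0]
    calc |u j - T x + γ * T j| ≤ |u j - T x| + |γ * T j| := abs_add_le _ _
      _ ≤ |u j| + |T x| + γ * |T j| := by
          have := abs_sub (u j) (T x)
          rw [h4]; linarith
      _ ≤ 3 * (n : ℝ) ^ 2 * A := by
          have h5 : γ * |T j| ≤ |T j| := mul_le_of_le_one_left (abs_nonneg _) (le_of_lt hγ1)
          have h6 : (n : ℝ) * A ≤ (n : ℝ) * ((n : ℝ) * A) :=
            le_mul_of_one_le_left (by positivity) hn1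
          have h7 : (n : ℝ) * ((n : ℝ) * A) = (n : ℝ) ^ 2 * A := by ring
          linarith
  have hhalf : (1 - γ) * (3 * (n : ℝ) ^ 2 * A) < sep / 2 := by nlinarith [hδ6]
  have hstrictMax : ∀ (x : Fin n) (h : x ∈ VMax) (j : Fin n), (x, j) ∈ E → j ≠ σ ⟨x, h⟩ →
      (1 - γ) * wt E r (x, j) + γ * w j < w x := by
    intro x h j hj hne
    have h1 := hkey x j hj
    have h2 := hgapMax x h j hj hne
    have h3 := hsmall x j
    have h4 : (1 - γ) ^ 2 * (u j - T x + γ * T j) ≥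
        -((1 - γ) * ((1 - γ) * (3 * (n : ℝ) ^ 2 * A))) := by
      have := neg_abs_le (u j - T x + γ * T j)
      nlinarith
    nlinarith [mul_pos hδpos hsep_pos]
  have hstrictMin : ∀ (x : Fin n) (h : x ∉ VMax) (j : Fin n), (x, j) ∈ E → j ≠ τ ⟨x, h⟩ →
      w x < (1 - γ) * wt E r (x, j) + γ * w j := by
    intro x h j hj hne
    have h1 := hkey x j hj
    have h2 := hgapMin x h j hj hne
    have h3 := hsmall x j
    have h4 : (1 - γ) ^ 2 * (u j - T x + γ * T j) ≤
        (1 - γ) * ((1 - γ) * (3 * (n : ℝ) ^ 2 * A)) := by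
      have := le_abs_self (u j - T x + γ * T j)
      nlinarith
    nlinarith [mul_pos hδpos hsep_pos]
  -- w is the Shapley solution
  have hwsol : IsShapleySol E VMax r γ w := by
    intro x
    constructor
    · intro h
      constructor
      · refine ⟨f x, (hzp x).1, hwrec x⟩
      · rintro val ⟨j, hj, rfl⟩
        by_cases hjσ : j = σ ⟨x, h⟩
        · have hfx : f x = σ ⟨x, h⟩ := by rw [hf]; exact dif_pos h
          rw [hjσ, ← hfx]
          exact le_of_eq (hwrec x).symm
        · exact le_of_lt (hstrictMax x h j hj hjσ)
    · intro h
      constructor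
      · refine ⟨f x, (hzp x).1, hwrec x⟩
      · rintro val ⟨j, hj, rfl⟩
        by_cases hjτ : j = τ ⟨x, h⟩
        · have hfx : f x = τ ⟨x, h⟩ := by rw [hf]; exact dif_neg h
          rw [hjτ, ← hfx]
          exact le_of_eq (hwrec x)
        · exact le_of_lt (hstrictMin x h j hj hjτ)
  have hvw : v = w := shapley_unique hγ0 hγ1 hv hwsol
  -- conclusion
  intro x j hj
  rw [hvw]
  constructor
  · intro heq
    by_contra hne
    by_cases h : x ∈ VMax
    · have hfx : f x = σ ⟨x, h⟩ := by rw [hf]; exact dif_pos h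
      have := hstrictMax x h j hj (by rw [← hfx]; exact hne)
      linarith
    · have hfx : f x = τ ⟨x, h⟩ := by rw [hf]; exact dif_neg h
      have := hstrictMin x h j hj (by rw [← hfx]; exact hne)
      linarith
  · intro hje
    rw [hje]
    exact hwrec x

end Core

/-- If `r ∈ P^{σ,τ}` with `(σ,τ) ∈ Ξ` and
`1 > γ > 1 − 1/(6n²Δ(r))`, then `(σ,τ)` is the unique pair of optimal policies of the
discounted game with discount factor `γ`: in the Shapley equations, the maximum at each
Max vertex `i` is achieved only by the edge `(i,σ(i))`, and the minimum at each Min vertex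
`i` only by `(i,τ(i))`. -/
theorem stmt18 (n : ℕ) (E : Finset (Fin n × Fin n)) (VMax : Finset (Fin n))
    (hout : ∀ i : Fin n, ∃ j : Fin n, (i, j) ∈ E)
    (herg : IsErgodicGraph E VMax)
    (σ : {i : Fin n // i ∈ VMax} → Fin n) (τ : {i : Fin n // i ∉ VMax} → Fin n)
    (hXi : InXi E VMax σ τ)
    (r : {e : Fin n × Fin n // e ∈ E} → ℝ) (hr : r ∈ Pcell E VMax σ τ)
    (γ : ℝ) (hγ1 : γ < 1) (hγ2 : 1 - 1 / (6 * n ^ 2 * Delta E VMax r) < γ) :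
    ∀ v : Fin n → ℝ, IsShapleySol E VMax r γ v → ∀ i : Fin n,
      (∀ h : i ∈ VMax, ∀ j : Fin n,
        ((i, j) ∈ E ∧ v i = (1 - γ) * wt E r (i, j) + γ * v j) ↔ j = σ ⟨i, h⟩) ∧
      (∀ h : i ∉ VMax, ∀ j : Fin n,
        ((i, j) ∈ E ∧ v i = (1 - γ) * wt E r (i, j) + γ * v j) ↔ j = τ ⟨i, h⟩) := by
  intro v hv i
  have hmain := core hXi hr hγ1 hγ2 hv
  constructor
  · intro h j
    constructor
    · rintro ⟨hjE, heq⟩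
      have hc : combine VMax σ τ i = σ ⟨i, h⟩ := dif_pos h
      rw [(hmain i j hjE).mp heq]
      exact hc
    · rintro rfl
      have hE : (i, σ ⟨i, h⟩) ∈ E := hXi.1 ⟨i, h⟩
      have hc : combine VMax σ τ i = σ ⟨i, h⟩ := dif_pos h
      exact ⟨hE, (hmain i _ hE).mpr hc.symm⟩
  · intro h j
    constructor
    · rintro ⟨hjE, heq⟩
      have hc : combine VMax σ τ i = τ ⟨i, h⟩ := dif_neg h
      rw [(hmain i j hjE).mp heq]
      exact hc
    · rintro rfl
      have hE : (i, τ ⟨i, h⟩) ∈ E := hXi.2.1 ⟨i, h⟩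
      have hc : combine VMax σ τ i = τ ⟨i, h⟩ := dif_neg h
      exact ⟨hE, (hmain i _ hE).mpr hc.symm⟩
end

section
/- Fix r ∈ ℝ^m and let r̃ ∈ ℝ^m, ε > 0 be such that ‖r − r̃‖_∞ ≤ ε. Let (σ,τ) ∈ Ξ and let E^{σ,τ} ⊆ E denote the set of edges used by (σ,τ). Define r^{(1)}, r^{(2)} ∈ ℝ^m by: r^{(1)}_{ij} = r̃_{ij} and r^{(2)}_{ij} = r̃_{ij} for (i,j) ∈ E^{σ,τ}, while r^{(1)}_{ij} = r̃_{ij} − 2nε and r^{(2)}_{ij} = r̃_{ij} + 2nε for (i,j) ∉ E^{σ,τ}. If (σ,τ) is optimal in the mean-payoff games with weights r^{(1)} and with weights r^{(2)}, then (σ,τ) is optimal in the mean-payoff game with weights r. -/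
open MeasureTheory

/-- `(σ,τ)` is a pair of optimal policies of the mean-payoff game with weights `r`. -/
def OptimalPair {n : ℕ} (E : Finset (Fin n × Fin n)) (VMax : Finset (Fin n))
    (r : {e : Fin n × Fin n // e ∈ E} → ℝ)
    (σ : {i : Fin n // i ∈ VMax} → Fin n) (τ : {i : Fin n // i ∉ VMax} → Fin n) : Prop :=
  IsMaxPolicy E VMax σ ∧ IsMinPolicy E VMax τ ∧
  ∀ σ' τ', IsMaxPolicy E VMax σ' → IsMinPolicy E VMax τ' → ∀ i : Fin n,
    payoff E r (combine VMax σ' τ) i ≤ payoff E r (combine VMax σ τ) i ∧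
    payoff E r (combine VMax σ τ) i ≤ payoff E r (combine VMax σ τ') i

/-- The edge `e` is used by the pair of policies `(σ,τ)`. -/
def UsedEdge {n : ℕ} {E : Finset (Fin n × Fin n)} (VMax : Finset (Fin n))
    (σ : {i : Fin n // i ∈ VMax} → Fin n) (τ : {i : Fin n // i ∉ VMax} → Fin n)
    (e : {e : Fin n × Fin n // e ∈ E}) : Prop :=
  if h : e.1.1 ∈ VMax then σ ⟨e.1.1, h⟩ = e.1.2 else τ ⟨e.1.1, h⟩ = e.1.2

lemma wt_eq {n : ℕ} (E : Finset (Fin n × Fin n)) (r : {e : Fin n × Fin n // e ∈ E} → ℝ)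
    {p : Fin n × Fin n} (h : p ∈ E) : wt E r p = r ⟨p, h⟩ := dif_pos h

lemma iter_step {α : Type*} (f : α → α) (i : α) (N₀ L : ℕ)
    (hper : f^[N₀ + L] i = f^[N₀] i) : ∀ t, N₀ ≤ t → f^[t + L] i = f^[t] i := by
  intro t ht
  obtain ⟨s, rfl⟩ : ∃ s, t = s + N₀ := ⟨t - N₀, by omega⟩
  have h1 : s + N₀ + L = s + (N₀ + L) := by omega
  rw [h1, Function.iterate_add_apply, hper, ← Function.iterate_add_apply]

lemma iter_mod {α : Type*} (f : α → α) (i : α) (N₀ L : ℕ) (hL : 0 < L)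
    (hper : f^[N₀ + L] i = f^[N₀] i) : ∀ s, f^[N₀ + s] i = f^[N₀ + s % L] i := by
  intro s
  induction s using Nat.strong_induction_on with
  | _ s ih =>
    by_cases h : s < L
    · rw [Nat.mod_eq_of_lt h]
    · have h1 : N₀ + s = (N₀ + (s - L)) + L := by omega
      rw [h1, iter_step f i N₀ L hper _ (by omega), ih (s - L) (by omega),
        Nat.mod_eq_sub_mod (show L ≤ s by omega)]

lemma cycle_mean {n : ℕ} (E : Finset (Fin n × Fin n))
    (r : {e : Fin n × Fin n // e ∈ E} → ℝ) (f : Fin n → Fin n) (i : Fin n)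
    (N₀ L : ℕ) (hL : 0 < L) (hper : f^[N₀ + L] i = f^[N₀] i) :
    payoff E r f i =
      (∑ t ∈ Finset.Ico N₀ (N₀ + L), wt E r (f^[t] i, f^[t + 1] i)) / L := by
  set a : ℕ → ℝ := fun t => wt E r (f^[t] i, f^[t + 1] i) with ha_def
  set C : ℝ := ∑ t ∈ Finset.Ico N₀ (N₀ + L), a t with hC_def
  set S : ℕ → ℝ := fun N => ∑ t ∈ Finset.range N, a t with hS_def
  have hL0 : (0:ℝ) < L := by exact_mod_cast hL
  have ha : ∀ t, N₀ ≤ t → a (t + L) = a t := by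
    intro t ht
    have h2 : t + L + 1 = (t + 1) + L := by omega
    simp only [ha_def]
    rw [iter_step f i N₀ L hper t ht, h2, iter_step f i N₀ L hper (t + 1) (by omega)]
  have hwin : ∀ N, N₀ ≤ N → (∑ t ∈ Finset.Ico N (N + L), a t) = C := by
    intro N hN
    induction N, hN using Nat.le_induction with
    | base => rfl
    | succ N hN ih =>
      have e1 : ∑ t ∈ Finset.Ico N ((N + L) + 1), a t
          = (∑ t ∈ Finset.Ico N (N + L), a t) + a (N + L) :=
        Finset.sum_Ico_succ_top (by omega) a
      have e2 : ∑ t ∈ Finset.Ico N ((N + L) + 1), a t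
          = a N + ∑ t ∈ Finset.Ico (N + 1) ((N + L) + 1), a t :=
        Finset.sum_eq_sum_Ico_succ_bot (by omega) a
      have e3 := ha N hN
      have e4 : (N + 1) + L = (N + L) + 1 := by omega
      rw [e4]
      linarith
  have hS : ∀ N, N₀ ≤ N → S (N + L) = S N + C := by
    intro N hN
    have h3 := Finset.sum_Ico_consecutive a (Nat.zero_le N) (Nat.le_add_right N L)
    simp only [hS_def, Finset.range_eq_Ico]
    rw [← h3, hwin N hN]
  set g : ℕ → ℝ := fun N => S N - N * (C / L) with hg_def
  have hg : ∀ N, N₀ ≤ N → g (N + L) = g N := by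
    intro N hN
    simp only [hg_def]
    rw [hS N hN]
    push_cast
    field_simp
    ring
  have hgb : ∀ N, ∃ M, M < N₀ + L ∧ g N = g M := by
    intro N
    induction N using Nat.strong_induction_on with
    | _ N ih =>
      by_cases h : N < N₀ + L
      · exact ⟨N, h, rfl⟩
      · obtain ⟨M, hM, hgM⟩ := ih (N - L) (by omega)
        have h2 : (N - L) + L = N := by omega
        have h3 := hg (N - L) (by omega)
        rw [h2] at h3
        exact ⟨M, hM, by rw [h3, hgM]⟩
  set B : ℝ := ∑ M ∈ Finset.range (N₀ + L), |g M| with hB_def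
  have hB : ∀ N, |g N| ≤ B := by
    intro N
    obtain ⟨M, hM, hgM⟩ := hgb N
    rw [hgM]
    exact Finset.single_le_sum (f := fun M => |g M|) (fun _ _ => abs_nonneg _)
      (Finset.mem_range.mpr hM)
  have key : ∀ N : ℕ, 1 ≤ N → ‖(N:ℝ)⁻¹ * S N - C / L‖ ≤ B * (N:ℝ)⁻¹ := by
    intro N hN
    have hN0 : (N:ℝ) ≠ 0 := Nat.cast_ne_zero.mpr (by omega)
    have e : (N:ℝ)⁻¹ * S N - C / L = (N:ℝ)⁻¹ * g N := by
      simp only [hg_def]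
      field_simp
    rw [e, norm_mul, norm_inv, Real.norm_natCast, mul_comm]
    exact mul_le_mul_of_nonneg_right (by rw [Real.norm_eq_abs]; exact hB N)
      (by positivity)
  have hB0 : Filter.Tendsto (fun N : ℕ => B * (N:ℝ)⁻¹) Filter.atTop (nhds 0) := by
    simpa using (tendsto_inv_atTop_nhds_zero_nat).const_mul B
  have T0 : Filter.Tendsto (fun N : ℕ => (N:ℝ)⁻¹ * S N - C / L) Filter.atTop (nhds 0) :=
    squeeze_zero_norm' (Filter.eventually_atTop.2 ⟨1, key⟩) hB0
  have T : Filter.Tendsto (fun N : ℕ => (N:ℝ)⁻¹ * S N) Filter.atTop (nhds (C / L)) := by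
    have := T0.add_const (C / L)
    simpa using this
  exact T.liminf_eq

lemma exists_cycle {n : ℕ} (f : Fin n → Fin n) (i : Fin n) :
    ∃ N₀ L : ℕ, 0 < L ∧ N₀ + L ≤ n ∧ f^[N₀ + L] i = f^[N₀] i := by
  have hinj : ¬ Function.Injective (fun k : Fin (n + 1) => f^[(k : ℕ)] i) := by
    intro hinj
    have := Fintype.card_le_of_injective _ hinj
    simp at this
  rw [Function.not_injective_iff] at hinj
  obtain ⟨a, b, heq, hne⟩ := hinj
  rcases hne.lt_or_gt with h | h
  · have h' : (a : ℕ) < (b : ℕ) := h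
    refine ⟨a, (b : ℕ) - a, by omega, by have := b.isLt; omega, ?_⟩
    rw [show (a : ℕ) + ((b : ℕ) - a) = b by omega]
    exact heq.symm
  · have h' : (b : ℕ) < (a : ℕ) := h
    refine ⟨b, (a : ℕ) - b, by omega, by have := a.isLt; omega, ?_⟩
    rw [show (b : ℕ) + ((a : ℕ) - b) = a by omega]
    exact heq

lemma payoff_iterate {n : ℕ} (E : Finset (Fin n × Fin n))
    (r : {e : Fin n × Fin n // e ∈ E} → ℝ) (f : Fin n → Fin n) (i : Fin n) (k : ℕ) :
    payoff E r f (f^[k] i) = payoff E r f i := by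
  obtain ⟨N₀, L, hL, hNL, hper⟩ := exists_cycle f i
  have hstep : f^[(N₀ + k) + L] i = f^[N₀ + k] i := by
    have h1 : N₀ + k + L = k + (N₀ + L) := by omega
    have h2 : N₀ + k = k + N₀ := by omega
    rw [h1, Function.iterate_add_apply, hper, ← Function.iterate_add_apply, h2]
  have e1 := cycle_mean E r f i (N₀ + k) L hL hstep
  have hit : ∀ m : ℕ, f^[m] (f^[k] i) = f^[m + k] i :=
    fun m => (Function.iterate_add_apply f m k i).symm
  have hper2 : f^[N₀ + L] (f^[k] i) = f^[N₀] (f^[k] i) := by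
    rw [hit, hit, show N₀ + L + k = (N₀ + k) + L by omega, hstep]
  have e2 := cycle_mean E r f (f^[k] i) N₀ L hL hper2
  rw [e1, e2]
  congr 1
  rw [Finset.sum_Ico_eq_sum_range, Finset.sum_Ico_eq_sum_range]
  simp only [Nat.add_sub_cancel_left]
  apply Finset.sum_congr rfl
  intro t _
  rw [hit, hit, show N₀ + t + k = N₀ + k + t by omega,
    show N₀ + t + 1 + k = N₀ + k + t + 1 by omega]

lemma payoff_congr {n : ℕ} (E : Finset (Fin n × Fin n))
    (r1 r2 : {e : Fin n × Fin n // e ∈ E} → ℝ) (f : Fin n → Fin n)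
    (h : ∀ z : Fin n, wt E r1 (z, f z) = wt E r2 (z, f z)) (i : Fin n) :
    payoff E r1 f i = payoff E r2 f i := by
  unfold payoff
  congr 1
  funext N
  congr 1
  apply Finset.sum_congr rfl
  intro t _
  rw [Function.iterate_succ_apply' f t i]
  exact h (f^[t] i)

lemma wt_neg {n : ℕ} (E : Finset (Fin n × Fin n))
    (r : {e : Fin n × Fin n // e ∈ E} → ℝ) (p : Fin n × Fin n) :
    wt E (fun e => -(r e)) p = - wt E r p := by
  unfold wt
  split <;> simp

lemma payoff_neg {n : ℕ} (E : Finset (Fin n × Fin n))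
    (r : {e : Fin n × Fin n // e ∈ E} → ℝ) (f : Fin n → Fin n) (i : Fin n) :
    payoff E (fun e => -(r e)) f i = - payoff E r f i := by
  obtain ⟨N₀, L, hL, _, hper⟩ := exists_cycle f i
  rw [cycle_mean E _ f i N₀ L hL hper, cycle_mean E r f i N₀ L hL hper]
  simp only [wt_neg]
  rw [Finset.sum_neg_distrib, neg_div]

lemma sum_wt_close {n : ℕ} (E : Finset (Fin n × Fin n))
    (r rt : {e : Fin n × Fin n // e ∈ E} → ℝ) (ε : ℝ)
    (hclose : ∀ e, |r e - rt e| ≤ ε)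
    (h : Fin n → Fin n) (hE : ∀ z, (z, h z) ∈ E) (i : Fin n) (s : Finset ℕ) :
    |(∑ t ∈ s, wt E r (h^[t] i, h^[t + 1] i))
      - ∑ t ∈ s, wt E rt (h^[t] i, h^[t + 1] i)| ≤ s.card * ε := by
  have hm : ∀ t : ℕ, (h^[t] i, h^[t + 1] i) ∈ E := by
    intro t
    rw [Function.iterate_succ_apply']
    exact hE _
  rw [← Finset.sum_sub_distrib]
  refine (Finset.abs_sum_le_sum_abs _ _).trans ?_
  calc ∑ t ∈ s, |wt E r (h^[t] i, h^[t + 1] i) - wt E rt (h^[t] i, h^[t + 1] i)|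
      ≤ ∑ _t ∈ s, ε := by
        refine Finset.sum_le_sum fun t _ => ?_
        rw [wt_eq E r (hm t), wt_eq E rt (hm t)]
        exact hclose _
    _ = s.card * ε := by rw [Finset.sum_const, nsmul_eq_mul]

lemma main_le {n : ℕ} (E : Finset (Fin n × Fin n))
    (r rt w : {e : Fin n × Fin n // e ∈ E} → ℝ) (ε : ℝ) (hε : 0 < ε)
    (hclose : ∀ e, |r e - rt e| ≤ ε)
    (f g : Fin n → Fin n)
    (hfE : ∀ z, (z, f z) ∈ E) (hgE : ∀ z, (z, g z) ∈ E)
    (hcyc : ∀ x y : Fin n, (∃ k : ℕ, 0 < k ∧ f^[k] x = x) →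
      (∃ k : ℕ, 0 < k ∧ f^[k] y = y) → ∃ k : ℕ, f^[k] x = y)
    (hfa : ∀ z, w ⟨(z, f z), hfE z⟩ = rt ⟨(z, f z), hfE z⟩)
    (hgu : ∀ z, g z ≠ f z → rt ⟨(z, g z), hgE z⟩ + 2 * n * ε ≤ w ⟨(z, g z), hgE z⟩)
    (hopt : ∀ j, payoff E w g j ≤ payoff E w f j)
    (i : Fin n) :
    payoff E r g i ≤ payoff E r f i := by
  obtain ⟨N₀, L, hL, hNL, hper⟩ := exists_cycle g i
  have hL0 : (0:ℝ) < L := by exact_mod_cast hL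
  have hgz : ∀ t : ℕ, g^[t + 1] i = g (g^[t] i) := fun t => Function.iterate_succ_apply' g t i
  by_cases hall : ∀ t ∈ Finset.Ico N₀ (N₀ + L), g (g^[t] i) = f (g^[t] i)
  · -- all cycle edges agree: same cycle, equal payoffs
    set x : Fin n := g^[N₀] i with hx_def
    have hgx : ∀ s : ℕ, g^[s] x = g^[N₀ + s] i := by
      intro s
      rw [hx_def, ← Function.iterate_add_apply, show s + N₀ = N₀ + s by omega]
    have hagree : ∀ s : ℕ, g (g^[N₀ + s] i) = f (g^[N₀ + s] i) := by
      intro s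
      rw [iter_mod g i N₀ L hL hper s]
      exact hall _ (Finset.mem_Ico.mpr ⟨by omega, by have := Nat.mod_lt s hL; omega⟩)
    have hfg : ∀ s : ℕ, f^[s] x = g^[s] x := by
      intro s
      induction s with
      | zero => rfl
      | succ s ih =>
        rw [Function.iterate_succ_apply', Function.iterate_succ_apply', ih, hgx s]
        exact (hagree s).symm
    have hperx : f^[0 + L] x = f^[0] x := by
      simp only [Nat.zero_add, Function.iterate_zero_apply]
      rw [hfg L, hgx L, hper]
    have e_g := cycle_mean E r g i N₀ L hL hper
    have e_fx := cycle_mean E r f x 0 L hL hperx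
    have hsum : (∑ t ∈ Finset.Ico 0 (0 + L), wt E r (f^[t] x, f^[t + 1] x))
        = ∑ t ∈ Finset.Ico N₀ (N₀ + L), wt E r (g^[t] i, g^[t + 1] i) := by
      rw [Finset.sum_Ico_eq_sum_range, Finset.sum_Ico_eq_sum_range]
      simp only [Nat.add_sub_cancel_left, Nat.zero_add]
      apply Finset.sum_congr rfl
      intro t _
      rw [hfg t, hfg (t + 1), hgx t, hgx (t + 1)]
      rfl
    have hpx : payoff E r f x = payoff E r g i := by rw [e_fx, e_g, hsum]
    -- relate payoff f x with payoff f i via unique cycle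
    obtain ⟨M₀, M, hM, hMn, hperf⟩ := exists_cycle f i
    have hxper : ∃ k : ℕ, 0 < k ∧ f^[k] x = x :=
      ⟨L, hL, by simpa using hperx⟩
    have hyper : ∃ k : ℕ, 0 < k ∧ f^[k] (f^[M₀] i) = f^[M₀] i :=
      ⟨M, hM, by rw [← Function.iterate_add_apply, show M + M₀ = M₀ + M by omega, hperf]⟩
    obtain ⟨k, hk⟩ := hcyc (f^[M₀] i) x hyper hxper
    have hfin : payoff E r f x = payoff E r f i := by
      rw [← hk, ← Function.iterate_add_apply, payoff_iterate]
    rw [← hfin, hpx]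
  · -- some cycle edge disagrees: strict perturbation argument
    push_neg at hall
    obtain ⟨t₀, ht₀mem, ht₀⟩ := hall
    have hn : 0 < n := i.pos
    have hcard : (Finset.Ico N₀ (N₀ + L)).card = L := by rw [Nat.card_Ico]; omega
    have hmemg : ∀ t : ℕ, (g^[t] i, g^[t + 1] i) ∈ E := by
      intro t; rw [hgz t]; exact hgE _
    -- h1 : |A_r - A_rt| ≤ L ε
    have h1 := sum_wt_close E r rt ε hclose g hgE i (Finset.Ico N₀ (N₀ + L))
    rw [hcard] at h1
    have h1' := abs_le.mp h1
    -- h2 : A_rt + 2 n ε ≤ A_w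
    have hterm : ∀ t ∈ Finset.Ico N₀ (N₀ + L),
        0 ≤ wt E w (g^[t] i, g^[t + 1] i) - wt E rt (g^[t] i, g^[t + 1] i) := by
      intro t _
      rw [hgz t]
      by_cases hc : g (g^[t] i) = f (g^[t] i)
      · rw [hc, wt_eq E w (hfE _), wt_eq E rt (hfE _), hfa]
        simp
      · rw [wt_eq E w (hgE _), wt_eq E rt (hgE _)]
        have := hgu _ hc
        have h2n : 0 ≤ 2 * (n:ℝ) * ε := by positivity
        linarith
    have ht₀' : 2 * (n:ℝ) * ε
        ≤ wt E w (g^[t₀] i, g^[t₀ + 1] i) - wt E rt (g^[t₀] i, g^[t₀ + 1] i) := by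
      rw [hgz t₀, wt_eq E w (hgE _), wt_eq E rt (hgE _)]
      have := hgu _ ht₀
      linarith
    have h2 : (∑ t ∈ Finset.Ico N₀ (N₀ + L), wt E rt (g^[t] i, g^[t + 1] i))
        + 2 * n * ε ≤ ∑ t ∈ Finset.Ico N₀ (N₀ + L), wt E w (g^[t] i, g^[t + 1] i) := by
      have hs := Finset.single_le_sum hterm ht₀mem
      rw [Finset.sum_sub_distrib] at hs
      linarith
    -- h3 : A_w ≤ payoff w f i * L
    have e_gw := cycle_mean E w g i N₀ L hL hper
    have h3 : (∑ t ∈ Finset.Ico N₀ (N₀ + L), wt E w (g^[t] i, g^[t + 1] i))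
        ≤ payoff E w f i * L := by
      have := hopt i
      rw [e_gw, div_le_iff₀ hL0] at this
      exact this
    -- h4 : payoff w f i = payoff rt f i
    have h4 : payoff E w f i = payoff E rt f i := by
      apply payoff_congr
      intro z
      rw [wt_eq E w (hfE z), wt_eq E rt (hfE z), hfa]
    -- h5 : payoff rt f i ≤ payoff r f i + ε
    have h5 : payoff E rt f i ≤ payoff E r f i + ε := by
      obtain ⟨M₀, M, hM, hMn, hperf⟩ := exists_cycle f i
      have hM0 : (0:ℝ) < M := by exact_mod_cast hM
      rw [cycle_mean E rt f i M₀ M hM hperf, cycle_mean E r f i M₀ M hM hperf]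
      have h6 := sum_wt_close E r rt ε hclose f hfE i (Finset.Ico M₀ (M₀ + M))
      rw [show (Finset.Ico M₀ (M₀ + M)).card = M by rw [Nat.card_Ico]; omega] at h6
      have h7 := abs_le.mp h6
      rw [div_le_iff₀ hM0, add_mul, div_mul_cancel₀ _ hM0.ne']
      linarith [h7.1]
    -- combine
    have hLn : (L:ℝ) ≤ n := by exact_mod_cast (show L ≤ n by omega)
    rw [cycle_mean E r g i N₀ L hL hper, div_le_iff₀ hL0]
    have h8 : payoff E rt f i * L ≤ (payoff E r f i + ε) * L :=
      mul_le_mul_of_nonneg_right h5 hL0.le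
    have h9 : (payoff E r f i + ε) * L = payoff E r f i * L + ε * L := by ring
    have h10 : (L:ℝ) * ε ≤ (n:ℝ) * ε := mul_le_mul_of_nonneg_right hLn hε.le
    rw [h4] at h3
    linarith [h1'.2]

/-- Optimality can be certified from perturbed weights: if
`‖r − r̃‖∞ ≤ ε` and `(σ,τ) ∈ Ξ` is optimal both for the weights `r⁽¹⁾` (equal to `r̃` on
the edges used by `(σ,τ)` and to `r̃ − 2nε` elsewhere) and for `r⁽²⁾` (equal to `r̃` on
used edges and `r̃ + 2nε` elsewhere), then `(σ,τ)` is optimal for the weights `r`. -/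
theorem stmt19 (n : ℕ) (E : Finset (Fin n × Fin n)) (VMax : Finset (Fin n))
    (hout : ∀ i : Fin n, ∃ j : Fin n, (i, j) ∈ E)
    (r rt : {e : Fin n × Fin n // e ∈ E} → ℝ) (ε : ℝ) (hε : 0 < ε)
    (hclose : ∀ e, |r e - rt e| ≤ ε)
    (σ : {i : Fin n // i ∈ VMax} → Fin n) (τ : {i : Fin n // i ∉ VMax} → Fin n)
    (hXi : InXi E VMax σ τ)
    (r1 r2 : {e : Fin n × Fin n // e ∈ E} → ℝ)
    (hused : ∀ e, UsedEdge VMax σ τ e → r1 e = rt e ∧ r2 e = rt e)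
    (hunused : ∀ e, ¬ UsedEdge VMax σ τ e →
      r1 e = rt e - 2 * n * ε ∧ r2 e = rt e + 2 * n * ε)
    (hopt1 : OptimalPair E VMax r1 σ τ) (hopt2 : OptimalPair E VMax r2 σ τ) :
    OptimalPair E VMax r σ τ := by
  obtain ⟨hσ, hτ, hcyc⟩ := hXi
  set f := combine VMax σ τ with hf_def
  have hfE : ∀ z, (z, f z) ∈ E := by
    intro z
    by_cases h : z ∈ VMax
    · simpa [hf_def, combine, h] using hσ ⟨z, h⟩
    · simpa [hf_def, combine, h] using hτ ⟨z, h⟩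
  have hUf : ∀ z (hz : (z, f z) ∈ E), UsedEdge VMax σ τ ⟨(z, f z), hz⟩ := by
    intro z hz
    by_cases h : z ∈ VMax <;> simp [UsedEdge, hf_def, combine, h]
  refine ⟨hσ, hτ, fun σ' τ' hσ' hτ' i => ⟨?_, ?_⟩⟩
  · -- Max direction, using r2
    set g := combine VMax σ' τ with hg_def
    have hgE : ∀ z, (z, g z) ∈ E := by
      intro z
      by_cases h : z ∈ VMax
      · simpa [hg_def, combine, h] using hσ' ⟨z, h⟩
      · simpa [hg_def, combine, h] using hτ ⟨z, h⟩
    refine main_le E r rt r2 ε hε hclose f g hfE hgE hcyc ?_ ?_ ?_ i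
    · intro z
      exact (hused _ (hUf z (hfE z))).2
    · intro z hne
      have hzmax : z ∈ VMax := by
        by_contra h
        exact hne (by simp [hg_def, hf_def, combine, h])
      have hnu : ¬ UsedEdge VMax σ τ ⟨(z, g z), hgE z⟩ := by
        intro h
        apply hne
        simp only [UsedEdge, dif_pos hzmax] at h
        rw [← h]
        simp [hf_def, combine, hzmax]
      have h2 := (hunused _ hnu).2
      linarith
    · intro j
      exact (hopt2.2.2 σ' τ hσ' hτ j).1
  · -- Min direction, using r1 and negated weights
    set g := combine VMax σ τ' with hg_def
    have hgE : ∀ z, (z, g z) ∈ E := by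
      intro z
      by_cases h : z ∈ VMax
      · simpa [hg_def, combine, h] using hσ ⟨z, h⟩
      · simpa [hg_def, combine, h] using hτ' ⟨z, h⟩
    have hclose' : ∀ e, |(fun e => -(r e)) e - (fun e => -(rt e)) e| ≤ ε := by
      intro e
      simp only
      rw [show -r e - -rt e = -(r e - rt e) by ring, abs_neg]
      exact hclose e
    have hfa' : ∀ z, (fun e => -(r1 e)) ⟨(z, f z), hfE z⟩
        = (fun e => -(rt e)) ⟨(z, f z), hfE z⟩ := by
      intro z
      simp only
      rw [(hused _ (hUf z (hfE z))).1]
    have hgu' : ∀ z, g z ≠ f z → (fun e => -(rt e)) ⟨(z, g z), hgE z⟩ + 2 * n * ε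
        ≤ (fun e => -(r1 e)) ⟨(z, g z), hgE z⟩ := by
      intro z hne
      have hzmin : z ∉ VMax := by
        intro h
        exact hne (by simp [hg_def, hf_def, combine, h])
      have hnu : ¬ UsedEdge VMax σ τ ⟨(z, g z), hgE z⟩ := by
        intro h
        apply hne
        simp only [UsedEdge, dif_neg hzmin] at h
        rw [← h]
        simp [hf_def, combine, hzmin]
      have h2 := (hunused _ hnu).1
      simp only
      linarith
    have hopt' : ∀ j, payoff E (fun e => -(r1 e)) g j
        ≤ payoff E (fun e => -(r1 e)) f j := by
      intro j
      rw [payoff_neg, payoff_neg]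
      have := (hopt1.2.2 σ τ' hσ hτ' j).2
      linarith
    have key := main_le E (fun e => -(r e)) (fun e => -(rt e)) (fun e => -(r1 e)) ε hε
      hclose' f g hfE hgE hcyc hfa' hgu' hopt' i
    rw [payoff_neg, payoff_neg] at key
    linarith
end
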